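/- Let p, q: ℝⁿ → (0,∞] be measurable exponents with q₊ < ∞, and let f be a measurable function on ℝⁿ. (i) If ‖f‖_{L^{p(·)}} ≤ 1 then ‖ |f|^{q(·)} ‖_{L^{p(·)/q(·)}} ≤ ‖f‖_{L^{p(·)}}^{q₋}. (ii) If ‖f‖_{L^{p(·)}} > 1 then ‖ |f|^{q(·)} ‖_{L^{p(·)/q(·)}} ≤ ‖f‖_{L^{p(·)}}^{q₊}. (iii) If ‖ |f|^{q(·)} ‖_{L^{p(·)/q(·)}} ≥ 1 then ‖f‖_{L^{p(·)}} ≤ ‖ |f|^{q(·)} ‖_{L^{p(·)/q(·)}}^{1/q₋}. (iv) If ‖ |f|^{q(·)} ‖_{L^{p(·)/q(·)}} < 1 then ‖f‖_{L^{p(·)}} ≤ ‖ |f|^{q(·)} ‖_{L^{p(·)/q(·)}}^{1/q₊}. -/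

import Mathlib

open MeasureTheory
open scoped ENNReal

noncomputable section

/-- The building block `ρ_{p(x)}(t)` of the variable-exponent modular. -/
def rhoVar (p : ℝ≥0∞) (t : ℝ≥0∞) : ℝ≥0∞ :=
  if p = ∞ then (if t ≤ 1 then 0 else ∞) else t ^ p.toReal

/-- The variable-exponent modular. -/
def varModular {n : ℕ} (p : EuclideanSpace ℝ (Fin n) → ℝ≥0∞)
    (f : EuclideanSpace ℝ (Fin n) → ℝ≥0∞) : ℝ≥0∞ :=
  ∫⁻ x, rhoVar (p x) (f x)

/-- The variable-exponent Lebesgue (Luxemburg) quasi-norm. -/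
def varNorm {n : ℕ} (p : EuclideanSpace ℝ (Fin n) → ℝ≥0∞)
    (f : EuclideanSpace ℝ (Fin n) → ℝ≥0∞) : ℝ≥0∞ :=
  sInf {lam : ℝ≥0∞ | 0 < lam ∧ varModular p (fun x => f x / lam) ≤ 1}

lemma rhoVar_mono (p : ℝ≥0∞) {t s : ℝ≥0∞} (h : t ≤ s) : rhoVar p t ≤ rhoVar p s := by
  unfold rhoVar
  split_ifs with h1 h2 h3
  · exact le_rfl
  · exact zero_le
  · exact absurd (h.trans ‹s ≤ 1›) h2
  · exact le_rfl
  · exact ENNReal.rpow_le_rpow h ENNReal.toReal_nonneg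

lemma rhoVar_div_rpow (p q : ℝ≥0∞) (hq0 : q ≠ 0) (hqt : q ≠ ∞) (t : ℝ≥0∞) :
    rhoVar (p / q) (t ^ q.toReal) = rhoVar p t := by
  have hQ : 0 < q.toReal := ENNReal.toReal_pos hq0 hqt
  unfold rhoVar
  by_cases hp : p = ∞
  · have hpq : p / q = ∞ := by rw [hp]; exact ENNReal.top_div_of_ne_top hqt
    subst hp
    rw [hpq, if_pos rfl, if_pos rfl]
    have : t ^ q.toReal ≤ 1 ↔ t ≤ 1 := by
      constructor
      · intro h
        by_contra hc
        exact absurd h (not_le.mpr (ENNReal.one_lt_rpow (not_le.mp hc) hQ))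
      · intro h; exact ENNReal.rpow_le_one h hQ.le
    simp [this]
  · have hpq : p / q ≠ ∞ := (ENNReal.div_lt_top hp hq0).ne
    rw [if_neg hp, if_neg hpq, ← ENNReal.rpow_mul]
    congr 1
    rw [ENNReal.toReal_div]
    field_simp

lemma rpow_pos_of_pos' {x : ℝ≥0∞} (h : 0 < x) {r : ℝ} (hr : 0 < r) : 0 < x ^ r := by
  rcases eq_or_ne x ⊤ with rfl | hx
  · simp [ENNReal.top_rpow_of_pos hr]
  · exact ENNReal.rpow_pos h hx

/-- Let `p, q` be measurable exponents with `0 < q₋` and `q₊ < ∞`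
and let `f` be measurable. Writing `F = |f|`, `G = |f|^{q(·)}`:
(i) `‖f‖_p ≤ 1 ⟹ ‖G‖_{p/q} ≤ ‖f‖_p^{q₋}`; (ii) `‖f‖_p > 1 ⟹ ‖G‖_{p/q} ≤ ‖f‖_p^{q₊}`;
(iii) `‖G‖_{p/q} ≥ 1 ⟹ ‖f‖_p ≤ ‖G‖_{p/q}^{1/q₋}`; (iv) `‖G‖_{p/q} < 1 ⟹
`‖f‖_p ≤ ‖G‖_{p/q}^{1/q₊}`. -/
theorem varNorm_rpow_exponent_quotient {n : ℕ}
    (p q : EuclideanSpace ℝ (Fin n) → ℝ≥0∞)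
    (hp_meas : Measurable p) (hq_meas : Measurable q)
    (hp_pos : ∀ x, 0 < p x) (hq_pos : ∀ x, 0 < q x)
    (hq_minus : 0 < essInf q (volume : Measure (EuclideanSpace ℝ (Fin n))))
    (hq_plus : essSup q (volume : Measure (EuclideanSpace ℝ (Fin n))) < ∞)
    (f : EuclideanSpace ℝ (Fin n) → ℂ) (hf : Measurable f) :
    -- notation
    (let F : EuclideanSpace ℝ (Fin n) → ℝ≥0∞ := fun x => (‖f x‖₊ : ℝ≥0∞)
     let G : EuclideanSpace ℝ (Fin n) → ℝ≥0∞ := fun x => (‖f x‖₊ : ℝ≥0∞) ^ (q x).toReal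
     let pq : EuclideanSpace ℝ (Fin n) → ℝ≥0∞ := fun x => p x / q x
     let qminus : ℝ := (essInf q (volume : Measure (EuclideanSpace ℝ (Fin n)))).toReal
     let qplus : ℝ := (essSup q (volume : Measure (EuclideanSpace ℝ (Fin n)))).toReal
     (varNorm p F ≤ 1 → varNorm pq G ≤ (varNorm p F) ^ qminus) ∧
     (1 < varNorm p F → varNorm pq G ≤ (varNorm p F) ^ qplus) ∧
     (1 ≤ varNorm pq G → varNorm p F ≤ (varNorm pq G) ^ (1 / qminus)) ∧
     (varNorm pq G < 1 → varNorm p F ≤ (varNorm pq G) ^ (1 / qplus))) := by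
  intro F G pq qminus qplus
  have hGF : ∀ x, G x = F x ^ (q x).toReal := fun x => rfl
  have hpqd : ∀ x, pq x = p x / q x := fun x => rfl
  -- basic facts about the exponents
  obtain ⟨x₀, hx₀1, hx₀2⟩ :=
    ((ae_essInf_le (f := q) (μ := volume)).and (ENNReal.ae_le_essSup q)).exists
  have hqm_ne_top : essInf q volume ≠ ∞ := (lt_of_le_of_lt (hx₀1.trans hx₀2) hq_plus).ne
  have hqp_ne_zero : essSup q volume ≠ 0 := by
    intro h
    exact absurd ((hx₀1.trans hx₀2).trans_eq h) (not_le.mpr hq_minus)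
  have hqm_pos : 0 < qminus := ENNReal.toReal_pos hq_minus.ne' hqm_ne_top
  have hqp_pos : 0 < qplus := ENNReal.toReal_pos hqp_ne_zero hq_plus.ne
  have hAE : ∀ᵐ x ∂(volume : Measure (EuclideanSpace ℝ (Fin n))),
      q x ≠ ∞ ∧ qminus ≤ (q x).toReal ∧ (q x).toReal ≤ qplus := by
    filter_upwards [ae_essInf_le (f := q) (μ := volume), ENNReal.ae_le_essSup q] with x h1 h2
    have hne : q x ≠ ∞ := (h2.trans_lt hq_plus).ne
    exact ⟨hne, ENNReal.toReal_mono hne h1, ENNReal.toReal_mono hq_plus.ne h2⟩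
  -- key lemma A : from modular bound for p, get norm bound for pq
  have keyA : ∀ μ : ℝ≥0∞, varModular p (fun x => F x / μ) ≤ 1 →
      ∀ c : ℝ≥0∞, 0 < c →
      (∀ᵐ x ∂(volume : Measure (EuclideanSpace ℝ (Fin n))), μ ^ (q x).toReal ≤ c) →
      varNorm pq G ≤ c := by
    intro μ hmod c hc hce
    refine sInf_le ⟨hc, le_trans ?_ hmod⟩
    refine lintegral_mono_ae ?_
    filter_upwards [hAE, hce] with x hx hcx
    obtain ⟨hqx, hm, hM⟩ := hx
    have hq0 : q x ≠ 0 := (hq_pos x).ne'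
    calc rhoVar (pq x) (G x / c)
        ≤ rhoVar (pq x) ((F x / μ) ^ (q x).toReal) := by
          apply rhoVar_mono
          rw [ENNReal.div_rpow_of_nonneg _ _ ENNReal.toReal_nonneg, hGF]
          exact ENNReal.div_le_div_left hcx _
      _ = rhoVar (p x) (F x / μ) := by rw [hpqd]; exact rhoVar_div_rpow _ _ hq0 hqx _
  -- key lemma B : from modular bound for pq, get norm bound for p
  have keyB : ∀ ν : ℝ≥0∞, varModular pq (fun x => G x / ν) ≤ 1 →
      ∀ μ : ℝ≥0∞, 0 < μ →
      (∀ᵐ x ∂(volume : Measure (EuclideanSpace ℝ (Fin n))), ν ≤ μ ^ (q x).toReal) →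
      varNorm p F ≤ μ := by
    intro ν hmod μ hμ hμe
    refine sInf_le ⟨hμ, le_trans ?_ hmod⟩
    refine lintegral_mono_ae ?_
    filter_upwards [hAE, hμe] with x hx hνx
    obtain ⟨hqx, hm, hM⟩ := hx
    have hq0 : q x ≠ 0 := (hq_pos x).ne'
    calc rhoVar (p x) (F x / μ)
        = rhoVar (pq x) ((F x / μ) ^ (q x).toReal) := by
          rw [hpqd]; exact (rhoVar_div_rpow _ _ hq0 hqx _).symm
      _ ≤ rhoVar (pq x) (G x / ν) := by
          apply rhoVar_mono
          rw [ENNReal.div_rpow_of_nonneg _ _ ENNReal.toReal_nonneg, hGF]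
          exact ENNReal.div_le_div_left hνx _
  -- upward closure : any value strictly above the norm is admissible
  have memAbove : ∀ (P g : EuclideanSpace ℝ (Fin n) → ℝ≥0∞) (b : ℝ≥0∞),
      varNorm P g < b → 0 < b ∧ varModular P (fun x => g x / b) ≤ 1 := by
    intro P g b hb
    obtain ⟨a, ⟨ha0, ha1⟩, hab⟩ := sInf_lt_iff.mp hb
    refine ⟨ha0.trans hab, le_trans ?_ ha1⟩
    exact lintegral_mono fun x => rhoVar_mono _ (ENNReal.div_le_div_left hab.le _)
  set T := varNorm p F with hT
  set N := varNorm pq G with hN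
  -- claims giving bounds on N from admissible μ for p
  have claimSmall : ∀ μ : ℝ≥0∞, T < μ → μ ≤ 1 → N ≤ μ ^ qminus := by
    intro μ hμ hμ1
    obtain ⟨hμ0, hmod⟩ := memAbove p F μ hμ
    refine keyA μ hmod _ (rpow_pos_of_pos' hμ0 hqm_pos) ?_
    filter_upwards [hAE] with x ⟨_, hm, _⟩
    exact ENNReal.rpow_le_rpow_of_exponent_ge hμ1 hm
  have claimBig : ∀ μ : ℝ≥0∞, T < μ → 1 ≤ μ → N ≤ μ ^ qplus := by
    intro μ hμ hμ1
    obtain ⟨hμ0, hmod⟩ := memAbove p F μ hμ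
    refine keyA μ hmod _ (rpow_pos_of_pos' hμ0 hqp_pos) ?_
    filter_upwards [hAE] with x ⟨_, _, hM⟩
    exact ENNReal.rpow_le_rpow_of_exponent_le hμ1 hM
  -- claims giving bounds on T from admissible ν for pq
  have claimSmall' : ∀ ν : ℝ≥0∞, N < ν → ν ≤ 1 → T ≤ ν ^ (1 / qplus) := by
    intro ν hν hν1
    obtain ⟨hν0, hmod⟩ := memAbove pq G ν hν
    refine keyB ν hmod _ (rpow_pos_of_pos' hν0 (by positivity)) ?_
    filter_upwards [hAE] with x ⟨_, _, hM⟩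
    rw [← ENNReal.rpow_mul]
    calc ν = ν ^ (1 : ℝ) := (ENNReal.rpow_one ν).symm
      _ ≤ ν ^ (1 / qplus * (q x).toReal) := by
          apply ENNReal.rpow_le_rpow_of_exponent_ge hν1
          rw [div_mul_eq_mul_div, one_mul, div_le_one hqp_pos]
          exact hM
  have claimBig' : ∀ ν : ℝ≥0∞, N < ν → 1 ≤ ν → T ≤ ν ^ (1 / qminus) := by
    intro ν hν hν1
    obtain ⟨hν0, hmod⟩ := memAbove pq G ν hν
    refine keyB ν hmod _ (rpow_pos_of_pos' hν0 (by positivity)) ?_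
    filter_upwards [hAE] with x ⟨_, hm, _⟩
    rw [← ENNReal.rpow_mul]
    calc ν = ν ^ (1 : ℝ) := (ENNReal.rpow_one ν).symm
      _ ≤ ν ^ (1 / qminus * (q x).toReal) := by
          apply ENNReal.rpow_le_rpow_of_exponent_le hν1
          rw [div_mul_eq_mul_div, one_mul, le_div_iff₀ hqm_pos, one_mul]
          exact hm
  -- rpow inversion helpers
  have pow_inv_pow : ∀ (a : ℝ≥0∞) (r : ℝ), r ≠ 0 → (a ^ (1 / r)) ^ r = a := by
    intro a r hr; rw [← ENNReal.rpow_mul, one_div_mul_cancel hr, ENNReal.rpow_one]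
  have inv1 : ∀ (a b : ℝ≥0∞) (r : ℝ), 0 < r → a ≤ b ^ r → a ^ (1 / r) ≤ b := by
    intro a b r hr h
    have := ENNReal.rpow_le_rpow h (le_of_lt (by positivity : (0:ℝ) < 1 / r))
    rwa [← ENNReal.rpow_mul, mul_one_div, div_self hr.ne', ENNReal.rpow_one] at this
  have inv2 : ∀ (a b : ℝ≥0∞) (r : ℝ), 0 < r → a ≤ b ^ (1 / r) → a ^ r ≤ b := by
    intro a b r hr h
    have := ENNReal.rpow_le_rpow h hr.le
    rwa [pow_inv_pow _ _ hr.ne'] at this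
  refine ⟨?_, ?_, ?_, ?_⟩
  · -- (i)
    intro hT1
    rcases eq_or_lt_of_le hT1 with heq | hlt
    · -- T = 1
      have h1 : N ^ (1 / qplus) ≤ 1 := by
        refine le_of_forall_gt_imp_ge_of_dense fun c hc => ?_
        exact inv1 _ _ _ hqp_pos (claimBig c (heq ▸ hc) hc.le)
      have h2 : N ≤ 1 := by
        have := ENNReal.rpow_le_rpow h1 hqp_pos.le
        rwa [pow_inv_pow _ _ hqp_pos.ne', ENNReal.one_rpow] at this
      rw [heq, ENNReal.one_rpow]
      exact h2
    · -- T < 1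
      have h1 : N ^ (1 / qminus) ≤ T := by
        refine le_of_forall_gt_imp_ge_of_dense fun c hc => ?_
        obtain ⟨m, hm1, hm2⟩ := exists_between hlt
        have hμ : T < min c m := lt_min hc hm1
        have := inv1 _ _ _ hqm_pos (claimSmall _ hμ ((min_le_right c m).trans hm2.le))
        exact this.trans (min_le_left c m)
      have := ENNReal.rpow_le_rpow h1 hqm_pos.le
      rwa [pow_inv_pow _ _ hqm_pos.ne'] at this
  · -- (ii)
    intro hT1
    have h1 : N ^ (1 / qplus) ≤ T := by
      refine le_of_forall_gt_imp_ge_of_dense fun c hc => ?_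
      exact inv1 _ _ _ hqp_pos (claimBig c hc (hT1.trans hc).le)
    have := ENNReal.rpow_le_rpow h1 hqp_pos.le
    rwa [pow_inv_pow _ _ hqp_pos.ne'] at this
  · -- (iii)
    intro hN1
    have h1 : T ^ qminus ≤ N := by
      refine le_of_forall_gt_imp_ge_of_dense fun c hc => ?_
      exact inv2 _ _ _ hqm_pos (claimBig' c hc (hN1.trans hc.le))
    have := ENNReal.rpow_le_rpow h1 (le_of_lt (by positivity : (0:ℝ) < 1 / qminus))
    rwa [← ENNReal.rpow_mul, mul_one_div, div_self hqm_pos.ne', ENNReal.rpow_one] at this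
  · -- (iv)
    intro hN1
    have h1 : T ^ qplus ≤ N := by
      refine le_of_forall_gt_imp_ge_of_dense fun c hc => ?_
      obtain ⟨m, hm1, hm2⟩ := exists_between hN1
      have hν : N < min c m := lt_min hc hm1
      have := inv2 _ _ _ hqp_pos (claimSmall' _ hν ((min_le_right c m).trans hm2.le))
      exact this.trans (min_le_left c m)
    have := ENNReal.rpow_le_rpow h1 (le_of_lt (by positivity : (0:ℝ) < 1 / qplus))
    rwa [← ENNReal.rpow_mul, mul_one_div, div_self hqp_pos.ne', ENNReal.rpow_one] at this
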